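/- (Cumulative tier visitation, k = 2 per-tier comparison core) Let 0 < γ < 1 and r_1 < r_2 ≤ 0. Suppose (p_t^1, p_t^2) and (q_t^1, q_t^2) are nonnegative sequences with p_t^1 + p_t^2 = 1 = q_t^1 + q_t^2 for every t, and suppose Σ_{j=0}^t p_j^1 ≤ Σ_{j=0}^t q_j^1 for all t, with strict inequality for some t. Then Σ_{t=0}^∞ γ^t (r_1 p_t^1 + r_2 p_t^2) > Σ_{t=0}^∞ γ^t (r_1 q_t^1 + r_2 q_t^2). -/
import Mathlib

open Finset

private lemma geo_summable {γ : ℝ} (hγ0 : 0 < γ) (hγ1 : γ < 1) :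
    Summable (fun t : ℕ => γ ^ t) :=
  summable_geometric_of_lt_one hγ0.le hγ1

private lemma summable_weighted {γ : ℝ} (hγ0 : 0 < γ) (hγ1 : γ < 1)
    (a : ℕ → ℝ) (ha0 : ∀ t, 0 ≤ a t) (ha1 : ∀ t, a t ≤ 1) :
    Summable (fun t : ℕ => γ ^ t * a t) := by
  refine Summable.of_nonneg_of_le (fun t => mul_nonneg (pow_nonneg hγ0.le t) (ha0 t))
    (fun t => ?_) (geo_summable hγ0 hγ1)
  nlinarith [pow_nonneg hγ0.le t, ha1 t]

private lemma summable_abel {γ : ℝ} (hγ0 : 0 < γ) (hγ1 : γ < 1)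
    (a : ℕ → ℝ) (ha0 : ∀ t, 0 ≤ a t) (ha1 : ∀ t, a t ≤ 1) :
    Summable (fun t : ℕ => (1 - γ) * γ ^ t * ∑ j ∈ Finset.range (t + 1), a j) := by
  have hmaj : Summable (fun t : ℕ => (1 - γ) * ((t : ℝ) + 1) * γ ^ t) := by
    have h := summable_pow_mul_geometric_of_norm_lt_one 1 (r := γ) (by
      rw [Real.norm_eq_abs, abs_of_pos hγ0]; exact hγ1)
    have h1 : Summable (fun n : ℕ => (n : ℝ) * γ ^ n) := by simpa using h
    have h2 := (h1.add (geo_summable hγ0 hγ1)).mul_left (1 - γ)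
    exact h2.congr fun n => by ring
  refine Summable.of_nonneg_of_le (fun t => ?_) (fun t => ?_) hmaj
  · exact mul_nonneg (mul_nonneg (by linarith) (pow_nonneg hγ0.le t))
      (Finset.sum_nonneg fun j _ => ha0 j)
  · have hA : ∑ j ∈ Finset.range (t + 1), a j ≤ (t : ℝ) + 1 := by
      calc ∑ j ∈ Finset.range (t + 1), a j ≤ ∑ j ∈ Finset.range (t + 1), 1 :=
            Finset.sum_le_sum fun j _ => ha1 j
        _ = (t : ℝ) + 1 := by simp
    have h0 : (0:ℝ) ≤ (1 - γ) * γ ^ t := mul_nonneg (by linarith) (pow_nonneg hγ0.le t)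
    calc (1 - γ) * γ ^ t * ∑ j ∈ Finset.range (t + 1), a j
        ≤ (1 - γ) * γ ^ t * ((t : ℝ) + 1) := mul_le_mul_of_nonneg_left hA h0
      _ = (1 - γ) * ((t : ℝ) + 1) * γ ^ t := by ring

set_option maxHeartbeats 1000000 in
private lemma abel_geom {γ : ℝ} (hγ0 : 0 < γ) (hγ1 : γ < 1)
    (a : ℕ → ℝ) (ha0 : ∀ t, 0 ≤ a t) (ha1 : ∀ t, a t ≤ 1) :
    ∑' t : ℕ, γ ^ t * a t
      = ∑' t : ℕ, (1 - γ) * γ ^ t * ∑ j ∈ Finset.range (t + 1), a j := by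
  set f : ℕ × ℕ → ℝ := fun p => if p.2 ≤ p.1 then (1 - γ) * γ ^ p.1 * a p.2 else 0 with hf
  have hfnn : ∀ p, 0 ≤ f p := by
    intro p; simp only [hf]
    split
    · exact mul_nonneg (mul_nonneg (by linarith) (pow_nonneg hγ0.le _)) (ha0 _)
    · exact le_refl 0
  -- fiber sums in the t-first order
  have hfiber : ∀ t : ℕ, ∑' j : ℕ, f (t, j)
      = (1 - γ) * γ ^ t * ∑ j ∈ Finset.range (t + 1), a j := by
    intro t
    rw [tsum_eq_sum (s := Finset.range (t + 1)) (by
      intro b hb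
      simp only [hf, Finset.mem_range] at hb ⊢
      rw [if_neg (by omega)])]
    rw [Finset.mul_sum]
    refine Finset.sum_congr rfl fun j hj => ?_
    simp only [hf, Finset.mem_range] at hj ⊢
    rw [if_pos (by omega)]
  have hfibersummable : ∀ t : ℕ, Summable fun j : ℕ => f (t, j) := by
    intro t
    exact summable_of_ne_finset_zero (s := Finset.range (t + 1)) (by
      intro b hb
      simp only [hf, Finset.mem_range] at hb ⊢
      rw [if_neg (by omega)])
  have hS : Summable f := by
    rw [summable_prod_of_nonneg hfnn]
    refine ⟨hfibersummable, ?_⟩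
    refine (summable_abel hγ0 hγ1 a ha0 ha1).congr fun t => ?_
    exact (hfiber t).symm
  -- fiber sums in the j-first order
  have hfiber2 : ∀ j : ℕ, ∑' t : ℕ, f (t, j) = γ ^ j * a j := by
    intro j
    have hinj : Function.Injective (fun s : ℕ => s + j) := add_left_injective j
    have hzero : ∀ x, f (x, j) ≠ 0 → x ∈ Set.range (fun s : ℕ => s + j) := by
      intro x hx
      by_contra hc
      simp only [Set.mem_range] at hc
      have hnle : ¬ j ≤ x := fun h => hc ⟨x - j, by omega⟩
      apply hx
      simp only [hf]; rw [if_neg hnle]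
    have := hinj.tsum_eq (f := fun t => f (t, j))
      (Function.support_subset_iff.2 hzero)
    rw [← this]
    have hcalc : ∀ s : ℕ, f (s + j, j) = ((1 - γ) * a j * γ ^ j) * γ ^ s := by
      intro s
      simp only [hf]
      rw [if_pos (by omega), pow_add]
      ring
    calc ∑' s : ℕ, f (s + j, j) = ∑' s : ℕ, ((1 - γ) * a j * γ ^ j) * γ ^ s := by
          exact tsum_congr hcalc
      _ = ((1 - γ) * a j * γ ^ j) * ∑' s : ℕ, γ ^ s := tsum_mul_left
      _ = ((1 - γ) * a j * γ ^ j) * (1 - γ)⁻¹ := by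
          rw [tsum_geometric_of_lt_one hγ0.le hγ1]
      _ = (γ ^ j * a j) * ((1 - γ) * (1 - γ)⁻¹) := by ring
      _ = γ ^ j * a j := by
          rw [mul_inv_cancel₀ (by linarith : (1:ℝ) - γ ≠ 0), mul_one]
  calc ∑' t : ℕ, γ ^ t * a t = ∑' j : ℕ, ∑' t : ℕ, f (t, j) := by
        refine tsum_congr fun j => ?_
        rw [hfiber2 j, mul_comm]
    _ = ∑' t : ℕ, ∑' j : ℕ, f (t, j) := Summable.tsum_comm' (f := fun t j => f (t, j)) hS hS.prod_factor hS.prod_symm.prod_factor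
    _ = ∑' t : ℕ, (1 - γ) * γ ^ t * ∑ j ∈ Finset.range (t + 1), a j := tsum_congr hfiber

theorem two_tier_cumulative_visitation_value
    (γ r1 r2 : ℝ) (hγ0 : 0 < γ) (hγ1 : γ < 1)
    (hr : r1 < r2) (hr2 : r2 ≤ 0)
    (p1 p2 q1 q2 : ℕ → ℝ)
    (hp1 : ∀ t, 0 ≤ p1 t) (hp2 : ∀ t, 0 ≤ p2 t)
    (hq1 : ∀ t, 0 ≤ q1 t) (hq2 : ∀ t, 0 ≤ q2 t)
    (hp : ∀ t, p1 t + p2 t = 1) (hq : ∀ t, q1 t + q2 t = 1)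
    (hdom : ∀ t, ∑ j ∈ Finset.range (t + 1), p1 j ≤ ∑ j ∈ Finset.range (t + 1), q1 j)
    (hstrict : ∃ t, ∑ j ∈ Finset.range (t + 1), p1 j < ∑ j ∈ Finset.range (t + 1), q1 j) :
    ∑' t : ℕ, γ ^ t * (r1 * q1 t + r2 * q2 t) <
      ∑' t : ℕ, γ ^ t * (r1 * p1 t + r2 * p2 t) := by
  have hp1le : ∀ t, p1 t ≤ 1 := fun t => by have := hp t; have := hp2 t; linarith
  have hq1le : ∀ t, q1 t ≤ 1 := fun t => by have := hq t; have := hq2 t; linarith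
  -- rewrite each value as r2 * ∑ γ^t + (r1 - r2) * ∑ γ^t * a t
  have hsplit : ∀ (a1 a2 : ℕ → ℝ), (∀ t, 0 ≤ a1 t) → (∀ t, a1 t ≤ 1) →
      (∀ t, a1 t + a2 t = 1) →
      ∑' t : ℕ, γ ^ t * (r1 * a1 t + r2 * a2 t)
        = r2 * (1 - γ)⁻¹ + (r1 - r2) * ∑' t : ℕ, γ ^ t * a1 t := by
    intro a1 a2 h0 h1 hsum
    have heq : ∀ t : ℕ, γ ^ t * (r1 * a1 t + r2 * a2 t)
        = r2 * γ ^ t + (r1 - r2) * (γ ^ t * a1 t) := by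
      intro t
      have : a2 t = 1 - a1 t := by linarith [hsum t]
      rw [this]; ring
    rw [tsum_congr heq, Summable.tsum_add ((geo_summable hγ0 hγ1).mul_left r2)
        ((summable_weighted hγ0 hγ1 a1 h0 h1).mul_left (r1 - r2)),
      tsum_mul_left, tsum_mul_left, tsum_geometric_of_lt_one hγ0.le hγ1]
  rw [hsplit p1 p2 hp1 hp1le hp, hsplit q1 q2 hq1 hq1le hq]
  have hkey : ∑' t : ℕ, γ ^ t * p1 t < ∑' t : ℕ, γ ^ t * q1 t := by
    rw [abel_geom hγ0 hγ1 p1 hp1 hp1le, abel_geom hγ0 hγ1 q1 hq1 hq1le]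
    obtain ⟨t0, ht0⟩ := hstrict
    refine Summable.tsum_lt_tsum (i := t0) (fun t => ?_) ?_
      (summable_abel hγ0 hγ1 p1 hp1 hp1le) (summable_abel hγ0 hγ1 q1 hq1 hq1le)
    · exact mul_le_mul_of_nonneg_left (hdom t)
        (mul_nonneg (by linarith) (pow_nonneg hγ0.le t))
    · exact mul_lt_mul_of_pos_left ht0
        (mul_pos (by linarith) (pow_pos hγ0 t0))
  nlinarith [hkey]
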